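/- Let q ∈ ℂ ∖ {0} be not a root of unity, let γ₁, γ₂ ∈ ℂ(s) be nonzero, and set γ = γ₁/γ₂. Assume there exists a ∈ ℂ ∖ {0} such that either (a is a pole of γ^{ι₁}/γ and for every n ∈ ℤ the point qⁿ·a is not a zero of γ^{ι₁}/γ) or (a is a zero of γ^{ι₁}/γ and for every n ∈ ℤ the point qⁿ·a is not a pole of γ^{ι₁}/γ). Then the only pair (h₁, h₂) ∈ ℂ(s)² satisfying γ₁·h₁ + γ₂·h₂ = 0 with h₁^{ι₁} = −h₁ and h₂^{ι₂} = −h₂ is (h₁, h₂) = (0, 0). -/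

import Mathlib

/-!
Statement 8: if q is not a root of unity and γ^{ι₁}/γ (with γ = γ₁/γ₂) has a pole
(resp. zero) a ≠ 0 whose full q-orbit never meets a zero (resp. pole) of γ^{ι₁}/γ,
then the homogeneous decoupling equation γ₁h₁ + γ₂h₂ = 0 with h₁^{ι₁} = −h₁ and
h₂^{ι₂} = −h₂ has only the trivial solution.
-/

noncomputable section
open Polynomial

/-- `a` is a pole of the rational function `h`. -/
def IsPole (h : RatFunc ℂ) (a : ℂ) : Prop := h.denom.eval a = 0

/-- `a` is a zero of the rational function `h`. -/
def IsZero (h : RatFunc ℂ) (a : ℂ) : Prop := h.num.eval a = 0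

/-- Order of vanishing of a rational function at a point. -/
def myOrd (h : RatFunc ℂ) (a : ℂ) : ℤ :=
  (h.num.rootMultiplicity a : ℤ) - h.denom.rootMultiplicity a

lemma myOrd_div_eq (p r : Polynomial ℂ) (hp : p ≠ 0) (hr : r ≠ 0) (a : ℂ) :
    myOrd (algebraMap (Polynomial ℂ) (RatFunc ℂ) p / algebraMap (Polynomial ℂ) (RatFunc ℂ) r) a
      = (p.rootMultiplicity a : ℤ) - r.rootMultiplicity a := by
  set h := algebraMap (Polynomial ℂ) (RatFunc ℂ) p / algebraMap (Polynomial ℂ) (RatFunc ℂ) r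
    with hh
  have hp' : algebraMap (Polynomial ℂ) (RatFunc ℂ) p ≠ 0 := RatFunc.algebraMap_ne_zero hp
  have hr' : algebraMap (Polynomial ℂ) (RatFunc ℂ) r ≠ 0 := RatFunc.algebraMap_ne_zero hr
  have hne : h ≠ 0 := div_ne_zero hp' hr'
  have hd' : algebraMap (Polynomial ℂ) (RatFunc ℂ) h.denom ≠ 0 :=
    RatFunc.algebraMap_ne_zero h.denom_ne_zero
  have h1 : algebraMap (Polynomial ℂ) (RatFunc ℂ) h.num
      / algebraMap (Polynomial ℂ) (RatFunc ℂ) h.denom = h := h.num_div_denom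
  have key : h.num * r = h.denom * p := by
    apply RatFunc.algebraMap_injective
    rw [map_mul, map_mul]
    rw [div_eq_div_iff hd' hr'] at h1
    rw [h1]; ring
  have hn0 : h.num ≠ 0 := RatFunc.num_ne_zero hne
  have e1 : (h.num * r).rootMultiplicity a = (h.denom * p).rootMultiplicity a := by rw [key]
  rw [Polynomial.rootMultiplicity_mul (mul_ne_zero hn0 hr),
    Polynomial.rootMultiplicity_mul (mul_ne_zero h.denom_ne_zero hp)] at e1
  unfold myOrd
  omega

lemma myOrd_eq (h : RatFunc ℂ) (a : ℂ) :
    myOrd h a = (h.num.rootMultiplicity a : ℤ) - h.denom.rootMultiplicity a := rfl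

lemma myOrd_mul (x y : RatFunc ℂ) (hx : x ≠ 0) (hy : y ≠ 0) (a : ℂ) :
    myOrd (x * y) a = myOrd x a + myOrd y a := by
  have hxn := RatFunc.num_ne_zero hx
  have hyn := RatFunc.num_ne_zero hy
  have e : x * y = algebraMap (Polynomial ℂ) (RatFunc ℂ) (x.num * y.num)
      / algebraMap (Polynomial ℂ) (RatFunc ℂ) (x.denom * y.denom) := by
    rw [map_mul, map_mul, ← div_mul_div_comm, x.num_div_denom, y.num_div_denom]
  rw [e, myOrd_div_eq _ _ (mul_ne_zero hxn hyn) (mul_ne_zero x.denom_ne_zero y.denom_ne_zero),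
    Polynomial.rootMultiplicity_mul (mul_ne_zero hxn hyn),
    Polynomial.rootMultiplicity_mul (mul_ne_zero x.denom_ne_zero y.denom_ne_zero),
    myOrd_eq, myOrd_eq]
  push_cast
  ring

lemma myOrd_neg (x : RatFunc ℂ) (hx : x ≠ 0) (a : ℂ) : myOrd (-x) a = myOrd x a := by
  have : (-x) = (-1 : RatFunc ℂ) * x := by ring
  rw [this, myOrd_mul _ _ (by norm_num) hx]
  have e : (-1 : RatFunc ℂ) = algebraMap (Polynomial ℂ) (RatFunc ℂ) (-1)
      / algebraMap (Polynomial ℂ) (RatFunc ℂ) 1 := by simp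
  rw [e, myOrd_div_eq _ _ (by norm_num) one_ne_zero]
  have h1 : ((-1 : Polynomial ℂ)).rootMultiplicity a = 0 := by
    apply Polynomial.rootMultiplicity_eq_zero
    simp [Polynomial.IsRoot]
  have h2 : ((1 : Polynomial ℂ)).rootMultiplicity a = 0 := by
    apply Polynomial.rootMultiplicity_eq_zero
    simp [Polynomial.IsRoot]
  rw [h1, h2]; ring

lemma reflect_one_X_sub_C (b : ℂ) (hb : b ≠ 0) :
    Polynomial.reflect 1 (Polynomial.X - Polynomial.C b)
      = Polynomial.C (-b) * (Polynomial.X - Polynomial.C b⁻¹) := by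
  have l : Polynomial.reflect 1 (Polynomial.X - Polynomial.C b)
      = 1 - Polynomial.C b * Polynomial.X := by
    rw [Polynomial.reflect_sub, Polynomial.reflect_one_X, Polynomial.reflect_C, pow_one]
  have hbb : Polynomial.C b * Polynomial.C b⁻¹ = (1 : Polynomial ℂ) := by
    rw [← map_mul, mul_inv_cancel₀ hb, map_one]
  rw [l, map_neg]
  linear_combination -hbb

lemma rootMult_reflect (a : ℂ) (ha : a ≠ 0) :
    ∀ (k : ℕ) (r : Polynomial ℂ), r ≠ 0 → r.rootMultiplicity a⁻¹ = k →
      ∀ N, r.natDegree ≤ N → (Polynomial.reflect N r).rootMultiplicity a = k := by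
  intro k
  induction k with
  | zero =>
    intro r hr hk N hN
    have hnr : ¬ r.IsRoot a⁻¹ := fun hroot => by
      have := (Polynomial.rootMultiplicity_pos hr).mpr hroot
      omega
    apply Polynomial.rootMultiplicity_eq_zero
    intro hroot
    apply hnr
    have hx : Invertible (a⁻¹) := invertibleOfNonzero (inv_ne_zero ha)
    have hiff := Polynomial.eval₂_reflect_eq_zero_iff (RingHom.id ℂ) a⁻¹ N r hN
    rw [invOf_eq_inv, inv_inv] at hiff
    exact hiff.mp hroot
  | succ k ih =>
    intro r hr hk N hN
    have hroot : r.IsRoot a⁻¹ := by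
      by_contra hc
      rw [Polynomial.rootMultiplicity_eq_zero hc] at hk
      omega
    obtain ⟨t, ht⟩ := (Polynomial.dvd_iff_isRoot).mpr hroot
    have ht0 : t ≠ 0 := by rintro rfl; simp at ht; exact hr ht
    have hXC : (Polynomial.X - Polynomial.C a⁻¹ : Polynomial ℂ) ≠ 0 :=
      Polynomial.X_sub_C_ne_zero a⁻¹
    have hdeg : r.natDegree = 1 + t.natDegree := by
      rw [ht, Polynomial.natDegree_mul hXC ht0, Polynomial.natDegree_X_sub_C]
    have hN1 : 1 ≤ N := by omega
    have htN : t.natDegree ≤ N - 1 := by omega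
    have hmul : r.rootMultiplicity a⁻¹ = 1 + t.rootMultiplicity a⁻¹ := by
      rw [ht, Polynomial.rootMultiplicity_mul (ht ▸ hr), Polynomial.rootMultiplicity_X_sub_C_self]
    have htk : t.rootMultiplicity a⁻¹ = k := by omega
    have hrefl : Polynomial.reflect N r
        = Polynomial.reflect 1 (Polynomial.X - Polynomial.C a⁻¹)
          * Polynomial.reflect (N - 1) t := by
      rw [ht, ← Polynomial.reflect_mul _ _ (le_of_eq (Polynomial.natDegree_X_sub_C a⁻¹)) htN]
      congr 1
      omega
    rw [hrefl, reflect_one_X_sub_C a⁻¹ (inv_ne_zero ha), inv_inv]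
    have hrt : Polynomial.reflect (N-1) t ≠ 0 := Polynomial.reflect_eq_zero_iff.ne.mpr ht0
    rw [mul_assoc, Polynomial.rootMultiplicity_mul
      (mul_ne_zero (by simpa using Polynomial.C_ne_zero.mpr (neg_ne_zero.mpr (inv_ne_zero ha)))
        (mul_ne_zero (Polynomial.X_sub_C_ne_zero a) hrt))]
    rw [Polynomial.rootMultiplicity_C, Polynomial.rootMultiplicity_mul
      (mul_ne_zero (Polynomial.X_sub_C_ne_zero a) hrt),
      Polynomial.rootMultiplicity_X_sub_C_self, ih t ht0 htk (N-1) htN]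
    omega

lemma comp_scale_ne_zero (c : ℂ) (hc : c ≠ 0) (r : Polynomial ℂ) (hr : r ≠ 0) :
    r.comp (Polynomial.C c * Polynomial.X) ≠ 0 := by
  intro h0
  apply hr
  have := congrArg (fun p : Polynomial ℂ => p.comp (Polynomial.C c⁻¹ * Polynomial.X)) h0
  simp only [Polynomial.zero_comp] at this
  rw [Polynomial.comp_assoc] at this
  have e : (Polynomial.C c * Polynomial.X).comp (Polynomial.C c⁻¹ * Polynomial.X)
      = (Polynomial.X : Polynomial ℂ) := by
    simp only [Polynomial.mul_comp, Polynomial.C_comp, Polynomial.X_comp]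
    rw [← mul_assoc, ← map_mul, mul_inv_cancel₀ hc, map_one, one_mul]
  rw [e, Polynomial.comp_X] at this
  exact this

lemma rootMult_comp_scale (c : ℂ) (hc : c ≠ 0) (a : ℂ) :
    ∀ (k : ℕ) (r : Polynomial ℂ), r ≠ 0 → r.rootMultiplicity (c * a) = k →
      (r.comp (Polynomial.C c * Polynomial.X)).rootMultiplicity a = k := by
  intro k
  induction k with
  | zero =>
    intro r hr hk
    have hnr : ¬ r.IsRoot (c * a) := fun hroot => by
      have := (Polynomial.rootMultiplicity_pos hr).mpr hroot
      omega
    apply Polynomial.rootMultiplicity_eq_zero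
    intro hroot
    apply hnr
    have : (r.comp (Polynomial.C c * Polynomial.X)).eval a = r.eval (c * a) := by
      rw [Polynomial.eval_comp]; simp
    rw [Polynomial.IsRoot, this] at hroot
    exact hroot
  | succ k ih =>
    intro r hr hk
    have hroot : r.IsRoot (c * a) := by
      by_contra hcon
      rw [Polynomial.rootMultiplicity_eq_zero hcon] at hk
      omega
    obtain ⟨t, ht⟩ := (Polynomial.dvd_iff_isRoot).mpr hroot
    have ht0 : t ≠ 0 := by rintro rfl; simp at ht; exact hr ht
    have hmul : r.rootMultiplicity (c * a) = 1 + t.rootMultiplicity (c * a) := by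
      rw [ht, Polynomial.rootMultiplicity_mul (ht ▸ hr), Polynomial.rootMultiplicity_X_sub_C_self]
    have htk : t.rootMultiplicity (c * a) = k := by omega
    have hcomp : r.comp (Polynomial.C c * Polynomial.X)
        = Polynomial.C c * (Polynomial.X - Polynomial.C a)
          * t.comp (Polynomial.C c * Polynomial.X) := by
      rw [ht, Polynomial.mul_comp, Polynomial.sub_comp, Polynomial.X_comp, Polynomial.C_comp]
      rw [map_mul]
      ring
    have htc : t.comp (Polynomial.C c * Polynomial.X) ≠ 0 := comp_scale_ne_zero c hc t ht0
    rw [hcomp, mul_assoc, Polynomial.rootMultiplicity_mul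
      (mul_ne_zero (Polynomial.C_ne_zero.mpr hc)
        (mul_ne_zero (Polynomial.X_sub_C_ne_zero a) htc)),
      Polynomial.rootMultiplicity_C,
      Polynomial.rootMultiplicity_mul (mul_ne_zero (Polynomial.X_sub_C_ne_zero a) htc),
      Polynomial.rootMultiplicity_X_sub_C_self, ih t ht0 htk]
    omega

lemma algebraMap_eq_aeval (p : Polynomial ℂ) :
    algebraMap (Polynomial ℂ) (RatFunc ℂ) p = Polynomial.aeval RatFunc.X p := by
  have h : (IsScalarTower.toAlgHom ℂ (Polynomial ℂ) (RatFunc ℂ))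
      = Polynomial.aeval RatFunc.X := by
    apply Polynomial.algHom_ext
    rw [Polynomial.aeval_X]
    exact RatFunc.algebraMap_X
  calc algebraMap (Polynomial ℂ) (RatFunc ℂ) p
      = (IsScalarTower.toAlgHom ℂ (Polynomial ℂ) (RatFunc ℂ)) p := rfl
    _ = Polynomial.aeval RatFunc.X p := by rw [h]

lemma natDegree_reflect_le (r : Polynomial ℂ) (N : ℕ) (hN : r.natDegree ≤ N) :
    (Polynomial.reflect N r).natDegree ≤ N := by
  apply Polynomial.natDegree_le_iff_coeff_eq_zero.mpr
  intro m hm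
  rw [Polynomial.coeff_reflect, Polynomial.revAt_eq_self_of_lt hm]
  exact Polynomial.coeff_eq_zero_of_natDegree_lt (lt_of_le_of_lt hN hm)

lemma reflect_reflect (r : Polynomial ℂ) (N : ℕ) :
    Polynomial.reflect N (Polynomial.reflect N r) = r := by
  ext i
  rw [Polynomial.coeff_reflect, Polynomial.coeff_reflect, Polynomial.revAt_invol]

lemma aeval_inv_X_eq (r : Polynomial ℂ) (N : ℕ) (hN : r.natDegree ≤ N) :
    Polynomial.aeval (RatFunc.X⁻¹ : RatFunc ℂ) r * RatFunc.X ^ N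
      = algebraMap (Polynomial ℂ) (RatFunc ℂ) (Polynomial.reflect N r) := by
  have hx : Invertible (RatFunc.X : RatFunc ℂ) := invertibleOfNonzero RatFunc.X_ne_zero
  have key := Polynomial.eval₂_reflect_mul_pow (algebraMap ℂ (RatFunc ℂ)) RatFunc.X N
    (Polynomial.reflect N r) (natDegree_reflect_le r N hN)
  rw [reflect_reflect, invOf_eq_inv] at key
  rw [Polynomial.aeval_def, key, algebraMap_eq_aeval, Polynomial.aeval_def]

lemma myOrd_subst (c : ℂ) (hc : c ≠ 0) (φ : RatFunc ℂ ≃ₐ[ℂ] RatFunc ℂ)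
    (hφ : φ RatFunc.X = RatFunc.C c * RatFunc.X⁻¹)
    (h : RatFunc ℂ) (hh : h ≠ 0) (a : ℂ) (ha : a ≠ 0) :
    myOrd (φ h) a = myOrd h (c * a⁻¹) := by
  have haux : ∀ p : Polynomial ℂ, φ (algebraMap (Polynomial ℂ) (RatFunc ℂ) p)
      = Polynomial.aeval (RatFunc.X⁻¹ : RatFunc ℂ) (p.comp (Polynomial.C c * Polynomial.X)) := by
    intro p
    rw [algebraMap_eq_aeval, ← Polynomial.aeval_algHom_apply φ RatFunc.X p, hφ,
      Polynomial.aeval_comp]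
    congr 1
    rw [map_mul, Polynomial.aeval_C, Polynomial.aeval_X]
    rfl
  set p := h.num with hp
  set r := h.denom with hr
  have hp0 : p ≠ 0 := RatFunc.num_ne_zero hh
  have hr0 : r ≠ 0 := h.denom_ne_zero
  set P := p.comp (Polynomial.C c * Polynomial.X) with hP
  set R := r.comp (Polynomial.C c * Polynomial.X) with hR
  have hP0 : P ≠ 0 := comp_scale_ne_zero c hc p hp0
  have hR0 : R ≠ 0 := comp_scale_ne_zero c hc r hr0
  set N₁ := P.natDegree
  set N₂ := R.natDegree
  have hPx := aeval_inv_X_eq P N₁ le_rfl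
  have hRx := aeval_inv_X_eq R N₂ le_rfl
  have hφh : φ h = Polynomial.aeval (RatFunc.X⁻¹ : RatFunc ℂ) P
      / Polynomial.aeval (RatFunc.X⁻¹ : RatFunc ℂ) R := by
    conv_lhs => rw [← h.num_div_denom]
    rw [map_div₀, haux, haux]
  have hRa : Polynomial.aeval (RatFunc.X⁻¹ : RatFunc ℂ) R ≠ 0 := by
    rw [← haux]
    simp only [ne_eq, EmbeddingLike.map_eq_zero_iff]
    exact RatFunc.algebraMap_ne_zero hr0
  have hPa : Polynomial.aeval (RatFunc.X⁻¹ : RatFunc ℂ) P ≠ 0 := by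
    rw [← haux]
    simp only [ne_eq, EmbeddingLike.map_eq_zero_iff]
    exact RatFunc.algebraMap_ne_zero hp0
  have hreP : Polynomial.reflect N₁ P ≠ 0 := Polynomial.reflect_eq_zero_iff.ne.mpr hP0
  have hreR : Polynomial.reflect N₂ R ≠ 0 := Polynomial.reflect_eq_zero_iff.ne.mpr hR0
  have hXn : (RatFunc.X : RatFunc ℂ) ≠ 0 := RatFunc.X_ne_zero
  have e : φ h = algebraMap (Polynomial ℂ) (RatFunc ℂ)
        (Polynomial.reflect N₁ P * Polynomial.X ^ N₂)
      / algebraMap (Polynomial ℂ) (RatFunc ℂ)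
        (Polynomial.reflect N₂ R * Polynomial.X ^ N₁) := by
    rw [map_mul, map_mul, map_pow, map_pow, RatFunc.algebraMap_X, ← hPx, ← hRx, hφh]
    rw [div_eq_div_iff hRa (mul_ne_zero (mul_ne_zero hRa (pow_ne_zero _ hXn)) (pow_ne_zero _ hXn))]
    ring
  have hrm : ∀ n : ℕ, (Polynomial.X ^ n : Polynomial ℂ).rootMultiplicity a = 0 := by
    intro n
    apply Polynomial.rootMultiplicity_eq_zero
    simp [Polynomial.IsRoot, ha]
  rw [e, myOrd_div_eq _ _ (mul_ne_zero hreP (pow_ne_zero _ Polynomial.X_ne_zero))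
      (mul_ne_zero hreR (pow_ne_zero _ Polynomial.X_ne_zero)),
    Polynomial.rootMultiplicity_mul (mul_ne_zero hreP (pow_ne_zero _ Polynomial.X_ne_zero)),
    Polynomial.rootMultiplicity_mul (mul_ne_zero hreR (pow_ne_zero _ Polynomial.X_ne_zero)),
    hrm, hrm,
    rootMult_reflect a ha (P.rootMultiplicity a⁻¹) P hP0 rfl N₁ le_rfl,
    rootMult_reflect a ha (R.rootMultiplicity a⁻¹) R hR0 rfl N₂ le_rfl,
    rootMult_comp_scale c hc a⁻¹ (p.rootMultiplicity (c * a⁻¹)) p hp0 rfl,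
    rootMult_comp_scale c hc a⁻¹ (r.rootMultiplicity (c * a⁻¹)) r hr0 rfl,
    myOrd_eq]
  push_cast
  ring

lemma no_soln (g d : ℤ → ℤ) (hrec : ∀ n : ℤ, g (n + 1) = d n + g n)
    (hd : ∀ n : ℤ, d n ≤ 0) (hd0 : d 0 < 0)
    (hfin : {n : ℤ | g n ≠ 0}.Finite) : False := by
  have hmono : ∀ m n : ℤ, m ≤ n → g n ≤ g m := by
    intro m n hmn
    exact Int.le_induction (motive := fun n _ => g n ≤ g m) (le_refl _)
      (fun k hk ih => by have h1 := hrec k; have h2 := hd k; omega) n hmn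
  obtain ⟨n₁, hn₁⟩ := ((Set.Ici_infinite (1 : ℤ)).diff hfin).nonempty
  obtain ⟨n₀, hn₀⟩ := ((Set.Iic_infinite (0 : ℤ)).diff hfin).nonempty
  simp only [Set.mem_diff, Set.mem_Ici, Set.mem_Iic, Set.mem_setOf_eq, not_not] at hn₁ hn₀
  have h1 : g n₁ ≤ g 1 := hmono 1 n₁ hn₁.1
  have h0 : g 0 ≤ g n₀ := hmono n₀ 0 hn₀.1
  have h01 : g 1 = d 0 + g 0 := by simpa using hrec 0
  omega

theorem statement8 (q : ℂ) (hq : q ≠ 0) (hroot : ∀ n : ℕ, 1 ≤ n → q ^ n ≠ 1)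
    (ι₁ ι₂ : RatFunc ℂ ≃ₐ[ℂ] RatFunc ℂ)
    (hι₁ : ι₁ RatFunc.X = RatFunc.X⁻¹)
    (hι₂ : ι₂ RatFunc.X = RatFunc.C q * RatFunc.X⁻¹)
    (γ₁ γ₂ : RatFunc ℂ) (hγ₁ : γ₁ ≠ 0) (hγ₂ : γ₂ ≠ 0)
    (hcrit : ∃ a : ℂ, a ≠ 0 ∧
      ((IsPole (ι₁ (γ₁ / γ₂) / (γ₁ / γ₂)) a ∧
          ∀ n : ℤ, ¬ IsZero (ι₁ (γ₁ / γ₂) / (γ₁ / γ₂)) (q ^ n * a)) ∨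
        (IsZero (ι₁ (γ₁ / γ₂) / (γ₁ / γ₂)) a ∧
          ∀ n : ℤ, ¬ IsPole (ι₁ (γ₁ / γ₂) / (γ₁ / γ₂)) (q ^ n * a)))) :
    ∀ h₁ h₂ : RatFunc ℂ, γ₁ * h₁ + γ₂ * h₂ = 0 →
      ι₁ h₁ = -h₁ → ι₂ h₂ = -h₂ → h₁ = 0 ∧ h₂ = 0 := by
  obtain ⟨a, ha, hcase⟩ := hcrit
  intro h₁ h₂ heq hh₁ hh₂
  by_cases h10 : h₁ = 0
  · subst h10
    refine ⟨rfl, ?_⟩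
    rw [mul_zero, zero_add] at heq
    exact (mul_eq_zero.mp heq).resolve_left hγ₂
  · exfalso
    set γ : RatFunc ℂ := γ₁ / γ₂ with hγdef
    set F : RatFunc ℂ := ι₁ γ / γ with hFdef
    have hγ0 : γ ≠ 0 := div_ne_zero hγ₁ hγ₂
    have hι₁γ : ι₁ γ ≠ 0 := by
      simp only [ne_eq, EmbeddingLike.map_eq_zero_iff]
      exact hγ0
    have hF0 : F ≠ 0 := div_ne_zero hι₁γ hγ0
    set v : RatFunc ℂ := γ * h₁ with hvdef
    have hv0 : v ≠ 0 := mul_ne_zero hγ0 h10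
    have hv2 : v = -h₂ := by
      rw [hvdef, hγdef]
      field_simp
      linear_combination heq
    have e₁ : ι₁ v = -(F * v) := by
      rw [hvdef, map_mul, hh₁, hFdef]
      field_simp
    have e₂ : ι₂ v = -v := by
      rw [hv2, map_neg, hh₂, neg_neg]
    have hqc : ∀ c : ℂ, c ≠ 0 → myOrd v (q * c) = myOrd F c + myOrd v c := by
      intro c hc
      have hc' : c⁻¹ ≠ 0 := inv_ne_zero hc
      have A := myOrd_subst 1 one_ne_zero ι₁ (by rw [hι₁, map_one, one_mul]) v hv0 c hc
      rw [one_mul] at A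
      have A' : myOrd (ι₁ v) c = myOrd F c + myOrd v c := by
        rw [e₁, myOrd_neg _ (mul_ne_zero hF0 hv0), myOrd_mul _ _ hF0 hv0]
      have B := myOrd_subst q hq ι₂ hι₂ v hv0 c⁻¹ hc'
      rw [inv_inv, e₂, myOrd_neg _ hv0] at B
      rw [← B, ← A, A']
    have hqa : ∀ n : ℤ, q ^ n * a ≠ 0 := fun n => mul_ne_zero (zpow_ne_zero n hq) ha
    set g : ℤ → ℤ := fun n => myOrd v (q ^ n * a) with hgdef
    set d : ℤ → ℤ := fun n => myOrd F (q ^ n * a) with hddef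
    have hrec : ∀ n : ℤ, g (n + 1) = d n + g n := by
      intro n
      have hstep : q ^ (n + 1) * a = q * (q ^ n * a) := by
        rw [zpow_add_one₀ hq]; ring
      rw [hgdef, hddef]
      simp only []
      rw [hstep]
      exact hqc _ (hqa n)
    have hzpow : ∀ k : ℤ, q ^ k = 1 → k = 0 := by
      intro k hk
      rcases lt_trichotomy k 0 with h | h | h
      · exfalso
        have hk' : q ^ (-k) = 1 := by rw [zpow_neg, hk, inv_one]
        have hnat : q ^ ((-k).toNat) = 1 := by
          rw [← zpow_natCast, Int.toNat_of_nonneg (by omega)]; exact hk'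
        exact hroot _ (by omega) hnat
      · exact h
      · exfalso
        have hnat : q ^ (k.toNat) = 1 := by
          rw [← zpow_natCast, Int.toNat_of_nonneg (by omega)]; exact hk
        exact hroot _ (by omega) hnat
    have hinj : Function.Injective (fun n : ℤ => q ^ n * a) := by
      intro m n hmn
      simp only at hmn
      have : q ^ m = q ^ n := mul_right_cancel₀ ha hmn
      have h1 : q ^ (m - n) = 1 := by
        rw [zpow_sub₀ hq, this, div_self (zpow_ne_zero n hq)]
      have := hzpow _ h1
      omega
    have hfin : {n : ℤ | g n ≠ 0}.Finite := by
      have hsub : {n : ℤ | g n ≠ 0}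
          ⊆ (fun n : ℤ => q ^ n * a) ⁻¹' {x | (v.num * v.denom).IsRoot x} := by
        intro n hn
        simp only [Set.mem_setOf_eq, hgdef] at hn ⊢
        have hor : v.num.eval (q ^ n * a) = 0 ∨ v.denom.eval (q ^ n * a) = 0 := by
          by_contra hcon
          push_neg at hcon
          have h1 := Polynomial.rootMultiplicity_eq_zero (p := v.num) (x := q ^ n * a) hcon.1
          have h2 := Polynomial.rootMultiplicity_eq_zero (p := v.denom) (x := q ^ n * a) hcon.2
          rw [myOrd_eq, h1, h2] at hn
          simp at hn
        rw [Set.mem_preimage, Set.mem_setOf_eq, Polynomial.IsRoot, Polynomial.eval_mul]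
        rcases hor with h | h
        · rw [h, zero_mul]
        · rw [h, mul_zero]
      exact (((Polynomial.finite_setOf_isRoot
        (mul_ne_zero (RatFunc.num_ne_zero hv0) v.denom_ne_zero)).preimage
        hinj.injOn).subset hsub)
    have hq0a : q ^ (0 : ℤ) * a = a := by rw [zpow_zero, one_mul]
    rcases hcase with ⟨hpol, hnz⟩ | ⟨hzero, hnp⟩
    · -- pole case
      have hd : ∀ n : ℤ, d n ≤ 0 := by
        intro n
        have hnum := Polynomial.rootMultiplicity_eq_zero
          (p := F.num) (x := q ^ n * a) (hnz n)
        rw [hddef]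
        simp only []
        rw [myOrd_eq, hnum]
        simp
      have hd0 : d 0 < 0 := by
        have hnum := Polynomial.rootMultiplicity_eq_zero (p := F.num) (x := q ^ (0:ℤ) * a)
          (hnz 0)
        have hden : 0 < F.denom.rootMultiplicity a :=
          (Polynomial.rootMultiplicity_pos F.denom_ne_zero).mpr hpol
        rw [hddef]
        simp only []
        rw [myOrd_eq, hnum, hq0a]
        omega
      exact no_soln g d hrec hd hd0 hfin
    · -- zero case
      have hd : ∀ n : ℤ, -(d n) ≤ 0 := by
        intro n
        have hden := Polynomial.rootMultiplicity_eq_zero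
          (p := F.denom) (x := q ^ n * a) (hnp n)
        rw [hddef]
        simp only []
        rw [myOrd_eq, hden]
        simp
      have hd0 : -(d 0) < 0 := by
        have hden := Polynomial.rootMultiplicity_eq_zero (p := F.denom) (x := q ^ (0:ℤ) * a)
          (hnp 0)
        have hnum : 0 < F.num.rootMultiplicity a :=
          (Polynomial.rootMultiplicity_pos (RatFunc.num_ne_zero hF0)).mpr hzero
        rw [hddef]
        simp only []
        rw [myOrd_eq, hden, hq0a]
        omega
      have hrec' : ∀ n : ℤ, -g (n + 1) = -(d n) + -g n := by
        intro n
        have := hrec n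
        omega
      have hfin' : {n : ℤ | -g n ≠ 0}.Finite := by
        apply hfin.subset
        intro n hn
        simp only [Set.mem_setOf_eq] at hn ⊢
        omega
      exact no_soln (fun n => -g n) (fun n => -(d n)) hrec' hd hd0 hfin'
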